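/- Let (φ_{s,t}) be an evolution family in ℍ with common Denjoy–Wolff point ∞. Then exactly one of the following two alternatives holds: (i) for every w ∈ ℍ and every s ≥ 0, Re φ_{s,t}(w) → +∞ as t → +∞; (ii) for every s ≥ 0 there exists a holomorphic map θ_s : ℍ → ℍ such that the functions w ↦ φ_{s,t}(w) − i·Im φ_{s,t}(1) converge to θ_s uniformly on compact subsets of ℍ as t → +∞. In case (ii), for every s ≥ 0 and w ∈ ℍ the limit lim_{t→+∞} Re φ_{s,t}(w) exists, is finite and positive, and equals Re θ_s(w). -/

import Mathlib

open Complex MeasureTheory Set Filter Topology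
open Metric

/-- The right half-plane `ℍ = {w : Re w > 0}`. -/
def RHP : Set ℂ := {w : ℂ | 0 < w.re}

lemma rhp_open : IsOpen RHP := isOpen_lt continuous_const Complex.continuous_re

lemma mem_rhp {w : ℂ} : w ∈ RHP ↔ 0 < w.re := Iff.rfl

lemma key_id (v u : ℂ) :
    (‖v + starRingEnd ℂ u‖) ^ 2 - (‖v - u‖) ^ 2 = 4 * v.re * u.re := by
  rw [Complex.sq_norm, Complex.sq_norm]
  simp [Complex.normSq_apply, Complex.add_re, Complex.add_im, Complex.sub_re, Complex.sub_im]
  ring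

lemma abs_sub_lt_abs_add_conj {v u : ℂ} (hv : v ∈ RHP) (hu : u ∈ RHP) :
    ‖v - u‖ < ‖v + starRingEnd ℂ u‖ := by
  have h := key_id v u
  have h4 : 0 < 4 * v.re * u.re := by
    have := hv; have := hu
    simp only [mem_rhp] at *
    nlinarith
  nlinarith [norm_nonneg (v - u), norm_nonneg (v + starRingEnd ℂ u)]

lemma abs_add_conj_pos {v u : ℂ} (hv : v ∈ RHP) (hu : u ∈ RHP) :
    0 < ‖v + starRingEnd ℂ u‖ :=
  lt_of_le_of_lt (norm_nonneg _) (abs_sub_lt_abs_add_conj hv hu)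

lemma add_conj_ne_zero {v u : ℂ} (hv : v ∈ RHP) (hu : u ∈ RHP) :
    v + starRingEnd ℂ u ≠ 0 := by
  intro h
  have := abs_add_conj_pos hv hu
  rw [h] at this; simp at this

/-- Schwarz–Pick inequality for holomorphic self-maps of the right half-plane,
in division-free (cross-multiplied) form. -/
lemma corePick {f : ℂ → ℂ} (hd : DifferentiableOn ℂ f RHP) (hm : Set.MapsTo f RHP RHP)
    {z w : ℂ} (hz : z ∈ RHP) (hw : w ∈ RHP) :
    ‖f z - f w‖ * ‖z + starRingEnd ℂ w‖
      ≤ ‖z - w‖ * ‖f z + starRingEnd ℂ (f w)‖ := by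
  set S : ℂ → ℂ := fun ζ => (w + starRingEnd ℂ w * ζ) / (1 - ζ) with hS
  have hSmaps : ∀ ζ ∈ ball (0:ℂ) 1, S ζ ∈ RHP := by
    intro ζ hζ
    have hζ1 : ‖ζ‖ < 1 := by simpa [Complex.dist_eq] using mem_ball.mp hζ
    have hne : (1:ℂ) - ζ ≠ 0 := by
      intro h
      have : ζ = 1 := by linear_combination -h
      rw [this] at hζ1; simp at hζ1
    have hre : (S ζ).re = (1 - Complex.normSq ζ) * w.re / Complex.normSq (1 - ζ) := by
      rw [hS]
      simp only [Complex.div_re, Complex.normSq_apply, Complex.add_re, Complex.add_im,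
        Complex.mul_re, Complex.mul_im, Complex.sub_re, Complex.sub_im, Complex.one_re,
        Complex.one_im, Complex.conj_re, Complex.conj_im]
      ring
    have h1 : 0 < 1 - Complex.normSq ζ := by
      have : Complex.normSq ζ < 1 := by
        rw [← Complex.sq_norm]; nlinarith [norm_nonneg ζ]
      linarith
    have h2 : 0 < Complex.normSq (1 - ζ) := Complex.normSq_pos.mpr hne
    have := hw
    rw [mem_rhp] at this ⊢
    rw [hre]; positivity
  have hSdiff : DifferentiableOn ℂ S (ball (0:ℂ) 1) := by
    apply DifferentiableOn.div
    · exact (differentiable_const _).differentiableOn.add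
        ((differentiable_const _).mul differentiable_id).differentiableOn
    · exact ((differentiable_const _).sub differentiable_id).differentiableOn
    · intro ζ hζ
      have hζ1 : ‖ζ‖ < 1 := by simpa [Complex.dist_eq] using mem_ball.mp hζ
      intro h
      have : ζ = 1 := by linear_combination -h
      rw [this] at hζ1; simp at hζ1
  have hS0 : S 0 = w := by rw [hS]; simp
  set g : ℂ → ℂ := fun ζ => (f (S ζ) - f w) / (f (S ζ) + starRingEnd ℂ (f w)) with hg
  have hg0 : g 0 = 0 := by rw [hg]; simp [hS0]
  have hfw : f w ∈ RHP := hm hw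
  have hden : ∀ ζ ∈ ball (0:ℂ) 1, f (S ζ) + starRingEnd ℂ (f w) ≠ 0 := fun ζ hζ =>
    add_conj_ne_zero (hm (hSmaps ζ hζ)) hfw
  have hgdiff : DifferentiableOn ℂ g (ball (0:ℂ) 1) := by
    have hfS : DifferentiableOn ℂ (fun ζ => f (S ζ)) (ball (0:ℂ) 1) :=
      hd.comp hSdiff hSmaps
    exact (hfS.sub (differentiableOn_const _)).div
      (hfS.add (differentiableOn_const _)) hden
  have hgmaps : Set.MapsTo g (ball (0:ℂ) 1) (ball (0:ℂ) 1) := by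
    intro ζ hζ
    have h1 : f (S ζ) ∈ RHP := hm (hSmaps ζ hζ)
    have h2 := abs_sub_lt_abs_add_conj h1 hfw
    have h3 := abs_add_conj_pos h1 hfw
    rw [mem_ball, Complex.dist_eq, sub_zero, hg]
    simp only [norm_div]
    rw [div_lt_one h3]; exact h2
  have hgz : ∀ ζ, ‖ζ‖ < 1 → ‖g ζ‖ ≤ ‖ζ‖ := by
    intro ζ hζ
    have := Complex.norm_le_norm_of_mapsTo_ball_self hgdiff (by rw [← hg0] at hgmaps ⊢; exact hgmaps.mono_right ball_subset_closedBall) hg0 hζ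
    exact this
  -- instantiate at ζ₀ = (z - w)/(z + conj w)
  set ζ₀ : ℂ := (z - w) / (z + starRingEnd ℂ w) with hζ₀
  have hzw : z + starRingEnd ℂ w ≠ 0 := add_conj_ne_zero hz hw
  have hζ₀lt : ‖ζ₀‖ < 1 := by
    rw [hζ₀, norm_div, div_lt_one (abs_add_conj_pos hz hw)]
    exact abs_sub_lt_abs_add_conj hz hw
  have hww : w + starRingEnd ℂ w ≠ 0 := by
    intro h
    have : (w + starRingEnd ℂ w).re = 0 := by rw [h]; simp
    rw [Complex.add_re, Complex.conj_re] at this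
    have := hw; rw [mem_rhp] at this; linarith
  have hSζ₀ : S ζ₀ = z := by
    rw [hS, hζ₀]
    have hne1 : (1:ℂ) - (z - w) / (z + starRingEnd ℂ w) ≠ 0 := by
      have : (1:ℂ) - (z - w) / (z + starRingEnd ℂ w)
          = (w + starRingEnd ℂ w) / (z + starRingEnd ℂ w) := by
        field_simp
        ring
      rw [this]
      exact div_ne_zero hww hzw
    show (w + starRingEnd ℂ w * ((z - w) / (z + starRingEnd ℂ w))) /
        (1 - (z - w) / (z + starRingEnd ℂ w)) = z
    rw [div_eq_iff hne1]
    field_simp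
    ring
  have := hgz ζ₀ hζ₀lt
  rw [hg] at this
  simp only [hSζ₀] at this
  rw [hζ₀] at this
  rw [norm_div, norm_div, div_le_div_iff₀ (abs_add_conj_pos (hm hz) hfw) (abs_add_conj_pos hz hw)] at this
  linarith

/-- Key estimate: for a holomorphic self-map `f` of the right half-plane,
`|f p - i·Im f(u)|` is controlled by `Re f(u)` times a hyperbolic-distance factor. -/
lemma lemA {f : ℂ → ℂ} (hd : DifferentiableOn ℂ f RHP) (hm : Set.MapsTo f RHP RHP)
    {p u : ℂ} (hp : p ∈ RHP) (hu : u ∈ RHP) :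
    ‖f p - ((f u).im : ℂ) * Complex.I‖ *
      (‖p + starRingEnd ℂ u‖ - ‖p - u‖)
    ≤ (f u).re *
      (‖p + starRingEnd ℂ u‖ + ‖p - u‖) := by
  have hcore := corePick hd hm hp hu
  set v : ℂ := f p - ((f u).im : ℂ) * Complex.I with hv
  set a : ℝ := (f u).re with ha
  have hfu : f u ∈ RHP := hm hu
  have ha0 : 0 < a := hfu
  have h1 : f p - f u = v - (a : ℂ) := by
    rw [hv, ha, ← Complex.re_add_im (f u)]
    ring_nf
    simp [Complex.re_add_im]
    ring
  have h2 : f p + starRingEnd ℂ (f u) = v + (a : ℂ) := by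
    rw [hv, ha, ← Complex.re_add_im (f u)]
    simp only [map_add, Complex.conj_ofReal, map_mul, Complex.conj_I]
    ring_nf
    simp [Complex.re_add_im]
    ring
  rw [h1, h2] at hcore
  have hX : ‖v‖ ≤ ‖v - (a:ℂ)‖ + a := by
    calc ‖v‖ ≤ ‖v - (a:ℂ)‖ + ‖(a:ℂ)‖ := by
          simpa using norm_add_le (v - (a:ℂ)) (a:ℂ)
      _ = ‖v - (a:ℂ)‖ + a := by rw [Complex.norm_real, Real.norm_eq_abs, _root_.abs_of_pos ha0]
  have hY : ‖v + (a:ℂ)‖ ≤ ‖v‖ + a := by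
    calc ‖v + (a:ℂ)‖ ≤ ‖v‖ + ‖(a:ℂ)‖ := norm_add_le _ _
      _ = ‖v‖ + a := by rw [Complex.norm_real, Real.norm_eq_abs, _root_.abs_of_pos ha0]
  set c := ‖p + starRingEnd ℂ u‖
  set d := ‖p - u‖
  have hd0 : 0 ≤ d := norm_nonneg _
  have hc0 : 0 ≤ c := norm_nonneg _
  nlinarith [norm_nonneg v, norm_nonneg (v - (a:ℂ))]

/-- Harnack-type inequality for holomorphic self-maps of the right half-plane. -/
lemma harnackRHP {f : ℂ → ℂ} (hd : DifferentiableOn ℂ f RHP) (hm : Set.MapsTo f RHP RHP)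
    {p u : ℂ} (hp : p ∈ RHP) (hu : u ∈ RHP) :
    (f p).re * (‖p + starRingEnd ℂ u‖ - ‖p - u‖)
      ≤ (f u).re * (‖p + starRingEnd ℂ u‖ + ‖p - u‖) := by
  have h := lemA hd hm hp hu
  have h1 : (f p).re ≤ ‖f p - ((f u).im : ℂ) * Complex.I‖ := by
    have : (f p - ((f u).im : ℂ) * Complex.I).re = (f p).re := by simp
    rw [← this]
    exact Complex.re_le_norm _
  have h2 : 0 ≤ ‖p + starRingEnd ℂ u‖ - ‖p - u‖ :=
    le_of_lt (sub_pos.mpr (abs_sub_lt_abs_add_conj hp hu))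
  nlinarith

/-- An evolution family in the right half-plane with common Denjoy-Wolff point `∞`,
together with its associated (Herglotz) vector field `F`. -/
structure EvolutionFamilyRHP where
  φ : ℝ → ℝ → ℂ → ℂ
  F : ℂ → ℝ → ℂ
  mapsTo : ∀ ⦃s t : ℝ⦄, 0 ≤ s → s ≤ t → Set.MapsTo (φ s t) RHP RHP
  holo : ∀ ⦃s t : ℝ⦄, 0 ≤ s → s ≤ t → DifferentiableOn ℂ (φ s t) RHP
  id_eq : ∀ ⦃s : ℝ⦄, 0 ≤ s → ∀ w ∈ RHP, φ s s w = w
  comp : ∀ ⦃s u t : ℝ⦄, 0 ≤ s → s ≤ u → u ≤ t → ∀ w ∈ RHP,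
    φ s t w = φ u t (φ s u w)
  F_meas : ∀ w ∈ RHP, Measurable (F w)
  F_holo : ∀ t : ℝ, 0 ≤ t → DifferentiableOn ℂ (fun w => F w t) RHP
  F_re_nonneg : ∀ w ∈ RHP, ∀ t : ℝ, 0 ≤ t → 0 ≤ (F w t).re
  F_bound : ∀ K : Set ℂ, K ⊆ RHP → IsCompact K → ∀ T : ℝ, 0 < T →
    ∃ k : ℝ → ℝ, (∀ t, 0 ≤ k t) ∧ MeasureTheory.IntegrableOn k (Set.Icc 0 T) ∧
      ∀ w ∈ K, ∀ᵐ t ∂(MeasureTheory.volume.restrict (Set.Icc (0:ℝ) T)),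
        ‖F w t‖ ≤ k t
  integral_eq : ∀ ⦃s t : ℝ⦄, 0 ≤ s → s ≤ t → ∀ w ∈ RHP,
    φ s t w = w + ∫ ξ in s..t, F (φ s ξ w) ξ

lemma mono_re (E : EvolutionFamilyRHP) {s u t : ℝ} (hs : 0 ≤ s) (hsu : s ≤ u) (hut : u ≤ t)
    {w : ℂ} (hw : w ∈ RHP) : (E.φ s u w).re ≤ (E.φ s t w).re := by
  have hu0 : 0 ≤ u := hs.trans hsu
  set v : ℂ := E.φ s u w with hv
  have hvR : v ∈ RHP := E.mapsTo hs hsu hw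
  have hcomp : E.φ s t w = E.φ u t v := E.comp hs hsu hut w hw
  have hint : E.φ u t v = v + ∫ ξ in u..t, E.F (E.φ u ξ v) ξ := E.integral_eq hu0 hut v hvR
  rw [hcomp, hint]
  simp only [Complex.add_re, le_add_iff_nonneg_right]
  by_cases hI : IntervalIntegrable (fun ξ => E.F (E.φ u ξ v) ξ) volume u t
  · rw [intervalIntegral.integral_of_le hut]
    have hre : (∫ ξ in Set.Ioc u t, E.F (E.φ u ξ v) ξ).re
        = ∫ ξ in Set.Ioc u t, (E.F (E.φ u ξ v) ξ).re := by
      have hInt := (intervalIntegrable_iff_integrableOn_Ioc_of_le hut).mp hI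
      have h := integral_re hInt
      simpa [RCLike.re_eq_complex_re] using h.symm
    rw [hre]
    apply MeasureTheory.setIntegral_nonneg measurableSet_Ioc
    intro ξ hξ
    exact E.F_re_nonneg _ (E.mapsTo hu0 (le_of_lt hξ.1) hvR) ξ (hu0.trans (le_of_lt hξ.1))
  · rw [intervalIntegral.integral_undef hI]
    simp

lemma re_le_phi (E : EvolutionFamilyRHP) {s t : ℝ} (hs : 0 ≤ s) (hst : s ≤ t)
    {w : ℂ} (hw : w ∈ RHP) : w.re ≤ (E.φ s t w).re := by
  have := mono_re E hs le_rfl hst hw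
  rwa [E.id_eq hs w hw] at this

lemma bdd_of_not_tendsto (E : EvolutionFamilyRHP) {s : ℝ} (hs : 0 ≤ s) {w : ℂ} (hw : w ∈ RHP)
    (h : ¬ Tendsto (fun t => (E.φ s t w).re) atTop atTop) :
    ∃ M : ℝ, ∀ t ≥ s, (E.φ s t w).re ≤ M := by
  by_contra hM
  push_neg at hM
  apply h
  rw [Filter.tendsto_atTop]
  intro b
  obtain ⟨t₀, ht₀s, ht₀⟩ := hM b
  filter_upwards [eventually_ge_atTop t₀] with t ht
  exact le_trans (le_of_lt ht₀) (mono_re E hs ht₀s ht hw)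

lemma harnack_bound (E : EvolutionFamilyRHP) {s : ℝ} (hs : 0 ≤ s) {u : ℂ} (hu : u ∈ RHP)
    {M : ℝ} (hM : ∀ t ≥ s, (E.φ s t u).re ≤ M) {w : ℂ} (hw : w ∈ RHP) :
    ∃ M' : ℝ, ∀ t ≥ s, (E.φ s t w).re ≤ M' := by
  set c := ‖w + starRingEnd ℂ u‖
  set d := ‖w - u‖
  have hcd : 0 < c - d := sub_pos.mpr (abs_sub_lt_abs_add_conj hw hu)
  refine ⟨max M 0 * (c + d) / (c - d), fun t ht => ?_⟩
  have hhar := harnackRHP (E.holo hs ht) (E.mapsTo hs ht) hw hu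
  rw [le_div_iff₀ hcd]
  have h1 : (E.φ s t u).re ≤ max M 0 := le_trans (hM t ht) (le_max_left _ _)
  have hd0 : (0:ℝ) ≤ d := norm_nonneg _
  nlinarith [norm_nonneg (w - u)]

lemma bdd_transfer (E : EvolutionFamilyRHP) {s₀ : ℝ} (hs₀ : 0 ≤ s₀) {w₀ : ℂ} (hw₀ : w₀ ∈ RHP)
    {M : ℝ} (hM : ∀ t ≥ s₀, (E.φ s₀ t w₀).re ≤ M)
    {s : ℝ} (hs : 0 ≤ s) {w : ℂ} (hw : w ∈ RHP) :
    ∃ M' : ℝ, ∀ t ≥ s, (E.φ s t w).re ≤ M' := by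
  rcases le_total s s₀ with hss | hss
  · -- s ≤ s₀ : φ_{s,t} w = φ_{s₀,t} (φ_{s,s₀} w) for t ≥ s₀
    set v : ℂ := E.φ s s₀ w with hv
    have hvR : v ∈ RHP := E.mapsTo hs hss hw
    obtain ⟨M', hM'⟩ := harnack_bound E hs₀ hw₀ hM hvR
    refine ⟨M', fun t ht => ?_⟩
    rcases le_total t s₀ with hts | hts
    · calc (E.φ s t w).re ≤ (E.φ s s₀ w).re := mono_re E hs ht hts hw
        _ = (E.φ s₀ s₀ v).re := by rw [E.id_eq hs₀ v hvR]
        _ ≤ M' := hM' s₀ le_rfl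
    · rw [E.comp hs hss hts w hw]
      exact hM' t hts
  · -- s₀ ≤ s : Re φ_{s,t} v = Re φ_{s₀,t} w₀ with v = φ_{s₀,s} w₀
    set v : ℂ := E.φ s₀ s w₀ with hv
    have hvR : v ∈ RHP := E.mapsTo hs₀ hss hw₀
    have hMv : ∀ t ≥ s, (E.φ s t v).re ≤ M := by
      intro t ht
      rw [← E.comp hs₀ hss ht w₀ hw₀]
      exact hM t (hss.trans ht)
    obtain ⟨M', hM'⟩ := harnack_bound E hs hvR hMv hw
    exact ⟨M', hM'⟩

lemma tendsto_re_limit (E : EvolutionFamilyRHP) {s : ℝ} (hs : 0 ≤ s) {w : ℂ} (hw : w ∈ RHP)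
    {M : ℝ} (hM : ∀ t ≥ s, (E.φ s t w).re ≤ M) :
    ∃ L : ℝ, (∀ t ≥ s, (E.φ s t w).re ≤ L) ∧ w.re ≤ L ∧
      Tendsto (fun t => (E.φ s t w).re) atTop (𝓝 L) := by
  set f : ℝ → ℝ := fun t => (E.φ s (max s t) w).re with hf
  have hmono : Monotone f := by
    intro t₁ t₂ h
    exact mono_re E hs (le_max_left s t₁) (max_le_max le_rfl h) hw
  have hbdd : BddAbove (Set.range f) := by
    refine ⟨M, ?_⟩
    rintro x ⟨t, rfl⟩
    exact hM _ (le_max_left s t)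
  have htend : Tendsto f atTop (𝓝 (⨆ t, f t)) := tendsto_atTop_ciSup hmono hbdd
  refine ⟨⨆ t, f t, fun t ht => ?_, ?_, ?_⟩
  · have : f t = (E.φ s t w).re := by rw [hf]; simp [max_eq_right ht]
    rw [← this]
    exact le_ciSup hbdd t
  · have : f s = w.re := by rw [hf]; simp [E.id_eq hs w hw]
    rw [← this]
    exact le_ciSup hbdd s
  · apply htend.congr'
    filter_upwards [eventually_ge_atTop s] with t ht
    rw [hf]; simp [max_eq_right ht]

lemma one_mem_rhp : (1:ℂ) ∈ RHP := by simp [mem_rhp]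

lemma main_conv (E : EvolutionFamilyRHP) {s : ℝ} (hs : 0 ≤ s)
    {M : ℝ} (hM : ∀ t ≥ s, (E.φ s t 1).re ≤ M) :
    ∃ θ : ℂ → ℂ,
      DifferentiableOn ℂ θ RHP ∧ Set.MapsTo θ RHP RHP ∧
      (∀ K : Set ℂ, K ⊆ RHP → IsCompact K →
        TendstoUniformlyOn
          (fun t w => E.φ s t w - ((E.φ s t 1).im : ℂ) * Complex.I) θ atTop K) ∧
      (∀ w ∈ RHP,
        Tendsto (fun t => (E.φ s t w).re) atTop (𝓝 ((θ w).re)) ∧ 0 < (θ w).re) := by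
  classical
  have h1R : (1:ℂ) ∈ RHP := one_mem_rhp
  obtain ⟨L, hLub, -, hLtend⟩ := tendsto_re_limit E hs h1R hM
  set g : ℝ → ℂ → ℂ := fun t w => E.φ s t w - ((E.φ s t 1).im : ℂ) * Complex.I with hg
  -- Key Cauchy-type estimate
  have hX : ∀ t ≥ s, ∀ t' ≥ t, ∀ w ∈ RHP,
      ‖g t' w - g t w‖ * (‖w + 1‖ - ‖w - 1‖)
        ≤ ((E.φ s t' 1).re - (E.φ s t 1).re) *
          (‖w + 1‖ + ‖w - 1‖) := by
    intro t ht t' ht' w hw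
    have ht0 : 0 ≤ t := hs.trans ht
    set p : ℂ := E.φ s t w with hp
    set u : ℂ := E.φ s t 1 with hu
    have hpR : p ∈ RHP := E.mapsTo hs ht hw
    have huR : u ∈ RHP := E.mapsTo hs ht h1R
    have hcomp1 : E.φ s t' w = E.φ t t' p := E.comp hs ht ht' w hw
    have hcomp2 : E.φ s t' 1 = E.φ t t' u := E.comp hs ht ht' 1 h1R
    set X : ℂ := g t' w - g t w with hXdef
    have hXeq : X = (E.φ t t' p - p) - (((E.φ t t' u).im - u.im : ℝ) : ℂ) * Complex.I := by
      rw [hXdef, hg]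
      simp only []
      rw [hcomp1, hcomp2]
      push_cast
      ring
    set c := ‖p + starRingEnd ℂ u‖ with hc
    set d := ‖p - u‖ with hd
    set R : ℝ := (E.φ s t' 1).re - (E.φ s t 1).re with hR
    have hR0 : 0 ≤ R := sub_nonneg.mpr (mono_re E hs ht ht' h1R)
    have hcpos : 0 < c := abs_add_conj_pos hpR huR
    have hdnn : 0 ≤ d := norm_nonneg _
    have hcd : 0 < c - d := sub_pos.mpr (abs_sub_lt_abs_add_conj hpR huR)
    have hest : ∀ δ : ℝ, 0 < δ →
        ‖X‖ * (c - d) ≤ (R + δ) * (c + d) + δ * (c - d) := by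
      intro δ hδ
      set fδ : ℂ → ℂ := fun z => E.φ t t' z - z + (δ:ℂ) with hfδ
      have hfd : DifferentiableOn ℂ fδ RHP :=
        ((E.holo ht0 ht').sub differentiable_id.differentiableOn).add
          (differentiableOn_const _)
      have hfm : Set.MapsTo fδ RHP RHP := by
        intro z hz
        have h1 := re_le_phi E ht0 ht' hz
        simp only [hfδ, mem_rhp, Complex.add_re, Complex.sub_re, Complex.ofReal_re]
        linarith
      have h := lemA hfd hfm hpR huR
      have him : (fδ u).im = (E.φ t t' u).im - u.im := by
        simp [hfδ]
      have hre2 : (fδ u).re = R + δ := by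
        simp only [hfδ, Complex.add_re, Complex.sub_re, Complex.ofReal_re, hR]
        rw [← hcomp2]
      have harg : fδ p - ((fδ u).im : ℂ) * Complex.I = X + (δ:ℂ) := by
        rw [him, hXeq]
        simp only [hfδ]
        push_cast
        ring
      rw [harg, hre2] at h
      have htri : ‖X‖ ≤ ‖X + (δ:ℂ)‖ + δ := by
        have h1 : ‖X‖ ≤ ‖X + (δ:ℂ)‖ + ‖(δ:ℂ)‖ := by
          simpa using norm_add_le (X + (δ:ℂ)) (-(δ:ℂ))
        rwa [Complex.norm_real, Real.norm_eq_abs, _root_.abs_of_pos hδ] at h1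
      nlinarith [norm_nonneg (X + (δ:ℂ))]
    have hXcd : ‖X‖ * (c - d) ≤ R * (c + d) := by
      apply le_of_forall_pos_le_add
      intro ε hε
      have hδ : 0 < ε / (2 * c) := by positivity
      have h := hest (ε / (2 * c)) hδ
      have h2 : (ε / (2 * c)) * (2 * c) = ε := div_mul_cancel₀ _ (by positivity)
      nlinarith
    -- Schwarz-Pick for φ_{s,t}
    have hsp := corePick (E.holo hs ht) (E.mapsTo hs ht) hw h1R
    rw [map_one] at hsp
    rw [← hp, ← hu, ← hc, ← hd] at hsp
    set b := ‖w + 1‖ with hb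
    set a' := ‖w - 1‖ with ha'
    have hab : a' < b := by
      have := abs_sub_lt_abs_add_conj hw h1R
      rwa [map_one] at this
    have ha'0 : 0 ≤ a' := norm_nonneg _
    have hb0 : 0 < b := lt_of_le_of_lt ha'0 hab
    -- combine
    have hXnn : 0 ≤ ‖X‖ := norm_nonneg _
    have step1 : ‖X‖ * ((b - a') * c) ≤ ‖X‖ * ((c - d) * b) := by
      apply mul_le_mul_of_nonneg_left _ hXnn
      nlinarith
    have step2 : ‖X‖ * ((c - d) * b) ≤ R * (c + d) * b := by
      have := mul_le_mul_of_nonneg_right hXcd (le_of_lt hb0)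
      nlinarith
    have step3 : R * (c + d) * b ≤ R * ((b + a') * c) := by
      nlinarith
    have final : ‖X‖ * ((b - a') * c) ≤ R * ((b + a') * c) := by linarith
    have := (mul_le_mul_iff_of_pos_right hcpos).mp (by linarith [final] :
      (‖X‖ * (b - a')) * c ≤ (R * (b + a')) * c)
    linarith
  -- uniform Cauchy on compacts
  have hcauchy : ∀ K : Set ℂ, K ⊆ RHP → IsCompact K → UniformCauchySeqOn g atTop K := by
    intro K hK hKc
    rw [Metric.uniformCauchySeqOn_iff]
    intro ε hε
    set q : ℂ → ℝ := fun w =>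
      (‖w + 1‖ + ‖w - 1‖) /
        (‖w + 1‖ - ‖w - 1‖) with hq
    have hqpos : ∀ x ∈ K, 0 < ‖x + 1‖ - ‖x - 1‖ := by
      intro x hx
      have := abs_sub_lt_abs_add_conj (hK hx) one_mem_rhp
      rw [map_one] at this
      linarith
    have hqcont : ContinuousOn q K := by
      apply ContinuousOn.div
      · exact ((continuous_norm.comp (continuous_id.add continuous_const)).add
          (continuous_norm.comp (continuous_id.sub continuous_const))).continuousOn
      · exact ((continuous_norm.comp (continuous_id.add continuous_const)).sub
          (continuous_norm.comp (continuous_id.sub continuous_const))).continuousOn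
      · exact fun x hx => ne_of_gt (hqpos x hx)
    obtain ⟨C, hC⟩ := hKc.exists_bound_of_continuousOn hqcont
    set C' := max C 1 with hC'
    have hC'pos : (0:ℝ) < C' := lt_of_lt_of_le one_pos (le_max_right _ _)
    have hev : ∀ᶠ t in atTop, L - ε / (2 * C') < (E.φ s t 1).re :=
      hLtend.eventually (eventually_gt_nhds (by
        have h0 : 0 < ε / (2*C') := by positivity
        linarith))
    obtain ⟨T₀, hT₀⟩ := eventually_atTop.mp hev
    refine ⟨max s T₀, ?_⟩
    have key : ∀ t ≥ max s T₀, ∀ t' ≥ t, ∀ x ∈ K, dist (g t' x) (g t x) < ε := by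
      intro t ht t' ht' x hx
      have hts : t ≥ s := le_trans (le_max_left _ _) ht
      have h := hX t hts t' ht' x (hK hx)
      have hR0 : 0 ≤ (E.φ s t' 1).re - (E.φ s t 1).re :=
        sub_nonneg.mpr (mono_re E hs hts ht' h1R)
      have hRsmall : (E.φ s t' 1).re - (E.φ s t 1).re < ε / (2 * C') := by
        have h1 : (E.φ s t' 1).re ≤ L := hLub t' (hts.trans ht')
        have h2 := hT₀ t (le_trans (le_max_right _ _) ht)
        linarith
      have hbax := hqpos x hx
      rw [Complex.dist_eq]
      have h3 : ‖g t' x - g t x‖ ≤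
          ((E.φ s t' 1).re - (E.φ s t 1).re) * q x := by
        rw [hq]
        simp only []
        rw [← mul_div_assoc, le_div_iff₀ hbax]
        exact h
      have hqC : q x ≤ C' := by
        have := hC x hx
        rw [Real.norm_eq_abs] at this
        exact le_trans (le_abs_self _) (le_trans this (le_max_left _ _))
      have hq0 : 0 ≤ q x := by
        rw [hq]
        apply div_nonneg _ (le_of_lt hbax)
        positivity
      calc ‖g t' x - g t x‖
          ≤ ((E.φ s t' 1).re - (E.φ s t 1).re) * q x := h3
        _ ≤ ((E.φ s t' 1).re - (E.φ s t 1).re) * C' := by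
            apply mul_le_mul_of_nonneg_left hqC hR0
        _ < (ε / (2 * C')) * C' := by
            apply mul_lt_mul_of_pos_right hRsmall hC'pos
        _ = ε / 2 := by field_simp
        _ < ε := by linarith
    intro m hm n hn x hx
    rcases le_total m n with hmn | hmn
    · rw [dist_comm]
      exact key m hm n hmn x hx
    · exact key n hn m hmn x hx
  -- pointwise limits and the limit function θ
  have hptc : ∀ w : ℂ, w ∈ RHP → ∃ z, Tendsto (fun t => g t w) atTop (𝓝 z) := by
    intro w hw
    apply cauchySeq_tendsto_of_complete
    have h := hcauchy {w} (singleton_subset_iff.mpr hw) isCompact_singleton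
    rw [Metric.uniformCauchySeqOn_iff] at h
    rw [Metric.cauchySeq_iff]
    intro ε hε
    obtain ⟨N, hN⟩ := h ε hε
    exact ⟨N, fun m hm n hn => hN m hm n hn w rfl⟩
  choose Z hZ using hptc
  set θ : ℂ → ℂ := fun w => if h : w ∈ RHP then Z w h else 0 with hθ
  have hθt : ∀ w (hw : w ∈ RHP), Tendsto (fun t => g t w) atTop (𝓝 (θ w)) := by
    intro w hw
    rw [hθ]
    simp only [dif_pos hw]
    exact hZ w hw
  have hTU : ∀ K : Set ℂ, K ⊆ RHP → IsCompact K → TendstoUniformlyOn g θ atTop K :=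
    fun K hK hKc => (hcauchy K hK hKc).tendstoUniformlyOn_of_tendsto
      (fun x hx => hθt x (hK hx))
  have hre : ∀ w (hw : w ∈ RHP),
      Tendsto (fun t => (E.φ s t w).re) atTop (𝓝 ((θ w).re)) := by
    intro w hw
    have h := (Complex.continuous_re.tendsto _).comp (hθt w hw)
    have heq : (fun t => (g t w).re) = fun t => (E.φ s t w).re := by
      funext t
      simp [hg]
    rw [← heq]
    exact h
  have hpos : ∀ w (hw : w ∈ RHP), 0 < (θ w).re := by
    intro w hw
    have hge : w.re ≤ (θ w).re := by
      apply ge_of_tendsto (hre w hw)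
      filter_upwards [eventually_ge_atTop s] with t ht
      exact re_le_phi E hs ht hw
    exact lt_of_lt_of_le hw hge
  have hTLU : TendstoLocallyUniformlyOn g θ atTop RHP :=
    (tendstoLocallyUniformlyOn_iff_forall_isCompact rhp_open).mpr hTU
  have hθdiff : DifferentiableOn ℂ θ RHP := by
    apply hTLU.differentiableOn _ rhp_open
    filter_upwards [eventually_ge_atTop s] with t ht
    exact (E.holo hs ht).sub (differentiableOn_const _)
  exact ⟨θ, hθdiff, fun w hw => hpos w hw, hTU, fun w hw => ⟨hre w hw, hpos w hw⟩⟩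

/-- [Step II of the boundary Denjoy-Wolff theorem]  For an evolution family in `ℍ` with
common Denjoy-Wolff point `∞`, exactly one of the following holds:
(i) `Re φ_{s,t}(w) → +∞` for all `w ∈ ℍ, s ≥ 0`; or
(ii) for every `s ≥ 0` there is a holomorphic `θ_s : ℍ → ℍ` with
`φ_{s,t} − i·Im φ_{s,t}(1) → θ_s` uniformly on compact subsets of `ℍ`, and in that case
for every `w ∈ ℍ` the limit `lim_{t→∞} Re φ_{s,t}(w)` exists, is finite and positive, and
equals `Re θ_s(w)`. -/
theorem evolutionFamilyRHP_dichotomy (E : EvolutionFamilyRHP) :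
    Xor'
      (∀ w ∈ RHP, ∀ s : ℝ, 0 ≤ s →
        Tendsto (fun t => (E.φ s t w).re) atTop atTop)
      (∀ s : ℝ, 0 ≤ s → ∃ θ : ℂ → ℂ,
        DifferentiableOn ℂ θ RHP ∧ Set.MapsTo θ RHP RHP ∧
        (∀ K : Set ℂ, K ⊆ RHP → IsCompact K →
          TendstoUniformlyOn
            (fun t w => E.φ s t w - ((E.φ s t 1).im : ℂ) * Complex.I) θ atTop K) ∧
        (∀ w ∈ RHP,
          Tendsto (fun t => (E.φ s t w).re) atTop (𝓝 ((θ w).re)) ∧ 0 < (θ w).re)) := by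
  by_cases hA : ∀ w ∈ RHP, ∀ s : ℝ, 0 ≤ s →
      Tendsto (fun t => (E.φ s t w).re) atTop atTop
  · left
    refine ⟨hA, ?_⟩
    intro hB
    obtain ⟨θ, -, -, -, hlim⟩ := hB 0 le_rfl
    have h1 := (hlim 1 one_mem_rhp).1
    have h2 := hA 1 one_mem_rhp 0 le_rfl
    exact not_tendsto_atTop_of_tendsto_nhds h1 h2
  · right
    push_neg at hA
    obtain ⟨w₀, hw₀, s₀, hs₀, hnt⟩ := hA
    obtain ⟨M₀, hM₀⟩ := bdd_of_not_tendsto E hs₀ hw₀ hnt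
    have hB : ∀ s : ℝ, 0 ≤ s → ∃ θ : ℂ → ℂ,
        DifferentiableOn ℂ θ RHP ∧ Set.MapsTo θ RHP RHP ∧
        (∀ K : Set ℂ, K ⊆ RHP → IsCompact K →
          TendstoUniformlyOn
            (fun t w => E.φ s t w - ((E.φ s t 1).im : ℂ) * Complex.I) θ atTop K) ∧
        (∀ w ∈ RHP,
          Tendsto (fun t => (E.φ s t w).re) atTop (𝓝 ((θ w).re)) ∧ 0 < (θ w).re) := by
      intro s hs
      obtain ⟨M, hM⟩ := bdd_transfer E hs₀ hw₀ hM₀ hs one_mem_rhp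
      exact main_conv E hs hM
    refine ⟨hB, ?_⟩
    intro hA'
    obtain ⟨θ, -, -, -, hlim⟩ := hB s₀ hs₀
    have h1 := (hlim w₀ hw₀).1
    exact not_tendsto_atTop_of_tendsto_nhds h1 (hA' w₀ hw₀ s₀ hs₀)
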